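/- Let a, b be integers with a ≥ 1, b ≥ 1 and a*b ≥ 4, and let c be the associated recursive sequence. Then for all natural numbers n and m, the product (∏_{i=1}^{n} c i) * (∏_{i=1}^{m} c i) divides ∏_{i=1}^{n+m} c i in ℤ; equivalently, the generalized binomial coefficient C(n,m) = (c_{n+m} · c_{n+m−1} ⋯ c_1) / ((c_n ⋯ c_1)(c_m ⋯ c_1)) is an integer. -/
import Mathlib


/-- The pair of recursive sequences `(c n, d n)` associated to a generalized
Cartan matrix of rank two with off-diagonal entries `-a`, `-b`:
`c 0 = d 0 = 0`, `c 1 = d 1 = 1`, `c (j+1) = a * d j - c (j-1)`,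
`d (j+1) = b * c j - d (j-1)`. -/
def KMcd (a b : ℤ) : ℕ → ℤ × ℤ
  | 0 => (0, 0)
  | 1 => (1, 1)
  | n + 2 => (a * (KMcd a b (n + 1)).2 - (KMcd a b n).1,
              b * (KMcd a b (n + 1)).1 - (KMcd a b n).2)

/-- The sequence `c`. -/
def KMc (a b : ℤ) (n : ℕ) : ℤ := (KMcd a b n).1

/-- The sequence `d`. -/
def KMd (a b : ℤ) (n : ℕ) : ℤ := (KMcd a b n).2

/-- `g n = gcd (c n) (d n)`. -/
def KMg (a b : ℤ) (n : ℕ) : ℕ := Int.gcd (KMc a b n) (KMd a b n)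

lemma KMc_zero (a b : ℤ) : KMc a b 0 = 0 := rfl
lemma KMc_one (a b : ℤ) : KMc a b 1 = 1 := rfl
lemma KMd_zero (a b : ℤ) : KMd a b 0 = 0 := rfl
lemma KMd_one (a b : ℤ) : KMd a b 1 = 1 := rfl

lemma KMc_rec (a b : ℤ) (n : ℕ) :
    KMc a b (n + 2) = a * KMd a b (n + 1) - KMc a b n := by
  simp [KMc, KMd, KMcd]

lemma KMd_rec (a b : ℤ) (n : ℕ) :
    KMd a b (n + 2) = b * KMc a b (n + 1) - KMd a b n := by
  simp [KMc, KMd, KMcd]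

lemma KMc_two (a b : ℤ) : KMc a b 2 = a := by
  have := KMc_rec a b 0
  simpa [KMc_zero, KMd_one] using this

lemma KMd_two (a b : ℤ) : KMd a b 2 = b := by
  have := KMd_rec a b 0
  simpa [KMd_zero, KMc_one] using this

lemma KM_parity2 (a b : ℤ) : ∀ k : ℕ,
    b * KMc a b (2 * k) = a * KMd a b (2 * k) ∧
    KMc a b (2 * k + 1) = KMd a b (2 * k + 1) := by
  intro k
  induction k with
  | zero => simp [KMc, KMd, KMcd]
  | succ k ih =>
    obtain ⟨h1, h2⟩ := ih
    have h3 : b * KMc a b (2 * k + 2) = a * KMd a b (2 * k + 2) := by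
      rw [KMc_rec, KMd_rec]
      linear_combination (-(a * b)) * h2 - h1
    have h4 : KMc a b (2 * k + 3) = KMd a b (2 * k + 3) := by
      have hc := KMc_rec a b (2 * k + 1)
      have hd := KMd_rec a b (2 * k + 1)
      rw [show 2 * k + 1 + 2 = 2 * k + 3 from by omega,
        show 2 * k + 1 + 1 = 2 * k + 2 from by omega] at hc hd
      rw [hc, hd]
      linear_combination -h3 - h2
    constructor
    · rw [show 2 * (k + 1) = 2 * k + 2 from by omega]; exact h3
    · rw [show 2 * (k + 1) + 1 = 2 * k + 3 from by omega]; exact h4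

lemma KM_odd_eq (a b : ℤ) {n : ℕ} (h : n % 2 = 1) : KMc a b n = KMd a b n := by
  obtain ⟨k, rfl⟩ : ∃ k, n = 2 * k + 1 := ⟨n / 2, by omega⟩
  exact (KM_parity2 a b k).2

lemma KM_even_eq (a b : ℤ) {n : ℕ} (h : n % 2 = 0) :
    b * KMc a b n = a * KMd a b n := by
  obtain ⟨k, rfl⟩ : ∃ k, n = 2 * k := ⟨n / 2, by omega⟩
  exact (KM_parity2 a b k).1

/-- Addition formulas for `c` and `d`. -/
lemma KM_addf (a b : ℤ) : ∀ n m : ℕ,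
    ((m + n + 1) % 2 = 0 →
      KMc a b (m + n + 1) =
        KMc a b (m + 1) * KMc a b (n + 1) - KMc a b m * KMc a b n ∧
      KMd a b (m + n + 1) =
        KMd a b (m + 1) * KMd a b (n + 1) - KMd a b m * KMd a b n) ∧
    ((m + n + 1) % 2 = 1 →
      KMc a b (m + n + 1) =
        KMc a b (m + 1) * KMd a b (n + 1) - KMc a b m * KMd a b n ∧
      KMd a b (m + n + 1) =
        KMd a b (m + 1) * KMc a b (n + 1) - KMd a b m * KMc a b n) := by
  intro n
  induction n using Nat.strong_induction_on with
  | _ n ih =>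
    intro m
    rcases n with _ | _ | n
    · -- n = 0
      refine ⟨fun _ => ⟨?_, ?_⟩, fun _ => ⟨?_, ?_⟩⟩ <;>
        simp [KMc_one, KMd_one, KMc_zero, KMd_zero]
    · -- n = 1
      have hrec := KMc_rec a b m
      have hrecd := KMd_rec a b m
      rw [show m + 1 + 1 = m + 2 from by omega]
      rw [show (1 : ℕ) + 1 = 2 from rfl]
      constructor
      · intro h
        have hod : KMc a b (m + 1) = KMd a b (m + 1) :=
          KM_odd_eq a b (by omega)
        refine ⟨?_, ?_⟩
        · rw [hrec, KMc_two, KMc_one]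
          linear_combination (-a) * hod
        · rw [hrecd, KMd_two, KMd_one]
          linear_combination b * hod
      · intro h
        have hev : b * KMc a b (m + 1) = a * KMd a b (m + 1) :=
          KM_even_eq a b (by omega)
        refine ⟨?_, ?_⟩
        · rw [hrec, KMd_two, KMd_one]
          linear_combination -hev
        · rw [hrecd, KMc_two, KMc_one]
          linear_combination hev
    · -- n + 2 : inductive step
      rw [show m + (n + 1 + 1) + 1 = m + n + 3 from by omega,
        show n + 1 + 1 + 1 = n + 3 from by omega,
        show n + 1 + 1 = n + 2 from by omega]
      have R1 : KMc a b (m + n + 3) = a * KMd a b (m + n + 2) - KMc a b (m + n + 1) := by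
        have := KMc_rec a b (m + n + 1)
        rwa [show m + n + 1 + 2 = m + n + 3 from by omega,
          show m + n + 1 + 1 = m + n + 2 from by omega] at this
      have Rd1 : KMd a b (m + n + 3) = b * KMc a b (m + n + 2) - KMd a b (m + n + 1) := by
        have := KMd_rec a b (m + n + 1)
        rwa [show m + n + 1 + 2 = m + n + 3 from by omega,
          show m + n + 1 + 1 = m + n + 2 from by omega] at this
      have Rc3 : KMc a b (n + 3) = a * KMd a b (n + 2) - KMc a b (n + 1) := by
        have := KMc_rec a b (n + 1)
        rwa [show n + 1 + 2 = n + 3 from by omega,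
          show n + 1 + 1 = n + 2 from by omega] at this
      have Rd3 : KMd a b (n + 3) = b * KMc a b (n + 2) - KMd a b (n + 1) := by
        have := KMd_rec a b (n + 1)
        rwa [show n + 1 + 2 = n + 3 from by omega,
          show n + 1 + 1 = n + 2 from by omega] at this
      have Rc2 := KMc_rec a b n
      have Rd2 := KMd_rec a b n
      constructor
      · -- (m+n+3) even : cc / dd forms
        intro h
        have ih2 := ((ih (n + 1) (by omega) m).2 (by omega))
        obtain ⟨ihc2, ihd2⟩ := ih2
        rw [show m + (n + 1) + 1 = m + n + 2 from by omega,
          show n + 1 + 1 = n + 2 from by omega] at ihc2 ihd2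
        have ih1 := ((ih n (by omega) m).1 (by omega))
        obtain ⟨ihc1, ihd1⟩ := ih1
        have hpar : KMc a b (m + n + 2) = KMd a b (m + n + 2) :=
          KM_odd_eq a b (by omega)
        have hA : KMd a b (m + n + 2) =
            KMc a b (m + 1) * KMd a b (n + 2) - KMc a b m * KMd a b (n + 1) := by
          rw [← hpar]; exact ihc2
        have hB : KMc a b (m + n + 2) =
            KMd a b (m + 1) * KMc a b (n + 2) - KMd a b m * KMc a b (n + 1) := by
          rw [hpar]; exact ihd2
        constructor
        · rw [R1, hA, ihc1, Rc3, Rc2]; ring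
        · rw [Rd1, hB, ihd1, Rd3, Rd2]; ring
      · -- (m+n+3) odd : cd / dc forms
        intro h
        have ih2 := ((ih (n + 1) (by omega) m).1 (by omega))
        obtain ⟨ihc2e, ihd2e⟩ := ih2
        rw [show m + (n + 1) + 1 = m + n + 2 from by omega,
          show n + 1 + 1 = n + 2 from by omega] at ihc2e ihd2e
        have ih1 := ((ih n (by omega) m).2 (by omega))
        obtain ⟨ihc1o, ihd1o⟩ := ih1
        have hpar : b * KMc a b (m + n + 2) = a * KMd a b (m + n + 2) :=
          KM_even_eq a b (by omega)
        constructor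
        · linear_combination R1 - hpar + b * ihc2e - ihc1o -
            KMc a b (m + 1) * Rd3 + KMc a b m * Rd2
        · linear_combination Rd1 + hpar + a * ihd2e - ihd1o -
            KMd a b (m + 1) * Rc3 + KMd a b m * Rc2

/-- `c (m+n)` lies in the ideal generated by `c m` and `c n`. -/
lemma KM_key (a b : ℤ) (m n : ℕ) (hm : 1 ≤ m) (hn : 1 ≤ n) :
    ∃ u v : ℤ, KMc a b (m + n) = u * KMc a b m + v * KMc a b n := by
  by_cases hp : (m + n) % 2 = 0
  · obtain ⟨n', rfl⟩ : ∃ n', n = n' + 1 := ⟨n - 1, by omega⟩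
    have h := ((KM_addf a b n' m).1 (by omega)).1
    refine ⟨-(KMc a b n'), KMc a b (m + 1), ?_⟩
    rw [show m + (n' + 1) = m + n' + 1 from by omega, h]; ring
  · rcases (by omega : n % 2 = 1 ∨ m % 2 = 1) with hno | hmo
    · obtain ⟨n', rfl⟩ : ∃ n', n = n' + 1 := ⟨n - 1, by omega⟩
      have h := ((KM_addf a b n' m).2 (by omega)).1
      have hd : KMd a b (n' + 1) = KMc a b (n' + 1) :=
        (KM_odd_eq a b (by omega)).symm
      refine ⟨-(KMd a b n'), KMc a b (m + 1), ?_⟩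
      rw [show m + (n' + 1) = m + n' + 1 from by omega, h, hd]; ring
    · obtain ⟨m', rfl⟩ : ∃ m', m = m' + 1 := ⟨m - 1, by omega⟩
      have h := ((KM_addf a b m' n).2 (by omega)).1
      have hd : KMd a b (m' + 1) = KMc a b (m' + 1) :=
        (KM_odd_eq a b (by omega)).symm
      refine ⟨KMc a b (n + 1), -(KMd a b m'), ?_⟩
      rw [show m' + 1 + n = n + m' + 1 from by omega, h, hd]; ring

theorem generalized_binomial_C_integral
    (a b : ℤ) (ha : 1 ≤ a) (hb : 1 ≤ b) (hab : 4 ≤ a * b) :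
    ∀ n m : ℕ,
      (∏ i ∈ Finset.Icc 1 n, KMc a b i) * (∏ i ∈ Finset.Icc 1 m, KMc a b i) ∣
        ∏ i ∈ Finset.Icc 1 (n + m), KMc a b i := by
  suffices H : ∀ N n m : ℕ, n + m = N →
      (∏ i ∈ Finset.Icc 1 n, KMc a b i) * (∏ i ∈ Finset.Icc 1 m, KMc a b i) ∣
        ∏ i ∈ Finset.Icc 1 (n + m), KMc a b i from
    fun n m => H (n + m) n m rfl
  intro N
  induction N using Nat.strong_induction_on with
  | _ N ih =>
    intro n m hnm
    rcases Nat.eq_zero_or_pos n with rfl | hn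
    · simp
    rcases Nat.eq_zero_or_pos m with rfl | hm
    · simp
    obtain ⟨u, v, huv⟩ := KM_key a b n m hn hm
    have hsplit : (∏ i ∈ Finset.Icc 1 (n + m), KMc a b i)
        = (∏ i ∈ Finset.Icc 1 (n + m - 1), KMc a b i) * KMc a b (n + m) := by
      conv_lhs => rw [show n + m = (n + m - 1) + 1 from by omega]
      rw [Finset.prod_Icc_succ_top (by omega),
        show n + m - 1 + 1 = n + m from by omega]
    have hPn : (∏ i ∈ Finset.Icc 1 n, KMc a b i)
        = (∏ i ∈ Finset.Icc 1 (n - 1), KMc a b i) * KMc a b n := by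
      conv_lhs => rw [show n = (n - 1) + 1 from by omega]
      rw [Finset.prod_Icc_succ_top (by omega),
        show n - 1 + 1 = n from by omega]
    have hPm : (∏ i ∈ Finset.Icc 1 m, KMc a b i)
        = (∏ i ∈ Finset.Icc 1 (m - 1), KMc a b i) * KMc a b m := by
      conv_lhs => rw [show m = (m - 1) + 1 from by omega]
      rw [Finset.prod_Icc_succ_top (by omega),
        show m - 1 + 1 = m from by omega]
    have ihn := ih (N - 1) (by omega) (n - 1) m (by omega)
    rw [show n - 1 + m = n + m - 1 from by omega] at ihn
    have ihm := ih (N - 1) (by omega) n (m - 1) (by omega)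
    rw [show n + (m - 1) = n + m - 1 from by omega] at ihm
    have d1 : (∏ i ∈ Finset.Icc 1 n, KMc a b i) * (∏ i ∈ Finset.Icc 1 m, KMc a b i) ∣
        KMc a b n * ∏ i ∈ Finset.Icc 1 (n + m - 1), KMc a b i := by
      have heq : (∏ i ∈ Finset.Icc 1 n, KMc a b i) * (∏ i ∈ Finset.Icc 1 m, KMc a b i)
          = KMc a b n *
            ((∏ i ∈ Finset.Icc 1 (n - 1), KMc a b i) * ∏ i ∈ Finset.Icc 1 m, KMc a b i) := by
        rw [hPn]; ring
      rw [heq]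
      exact mul_dvd_mul_left _ ihn
    have d2 : (∏ i ∈ Finset.Icc 1 n, KMc a b i) * (∏ i ∈ Finset.Icc 1 m, KMc a b i) ∣
        KMc a b m * ∏ i ∈ Finset.Icc 1 (n + m - 1), KMc a b i := by
      have heq : (∏ i ∈ Finset.Icc 1 n, KMc a b i) * (∏ i ∈ Finset.Icc 1 m, KMc a b i)
          = KMc a b m *
            ((∏ i ∈ Finset.Icc 1 n, KMc a b i) * ∏ i ∈ Finset.Icc 1 (m - 1), KMc a b i) := by
        rw [hPm]; ring
      rw [heq]
      exact mul_dvd_mul_left _ ihm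
    rw [hsplit, huv]
    have heq2 : (∏ i ∈ Finset.Icc 1 (n + m - 1), KMc a b i) *
        (u * KMc a b n + v * KMc a b m)
        = u * (KMc a b n * ∏ i ∈ Finset.Icc 1 (n + m - 1), KMc a b i) +
          v * (KMc a b m * ∏ i ∈ Finset.Icc 1 (n + m - 1), KMc a b i) := by ring
    rw [heq2]
    exact dvd_add (d1.mul_left u) (d2.mul_left v)
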